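/- Let p : T ⥤ B be a Waldhausen opfibration with B a Waldhausen category. Then T, equipped with total cofibrations and total weak equivalences, is a Waldhausen category. In particular: (C2) for every object X of T, the unique morphism from the initial object 0̄ of T to X is a total cofibration; (C3) pushouts of total cofibrations along arbitrary morphisms exist in T and total cofibrations are stable under such pushouts; (W2) the gluing lemma holds for total weak equivalences. -/

import Mathlib

open CategoryTheory

universe v u v₂ u₂

section AuxWaldhausen
variable {B : Type u} [Category.{v} B] {F : B ⥤ Cat.{v₂, u₂}}

lemma isIso_base_of_isIso {X Y : Grothendieck F} (φ : X ⟶ Y) (h : IsIso φ) : IsIso φ.base := by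
  have : IsIso ((Grothendieck.forget F).map φ) := inferInstance
  exact this

lemma map_comp_obj' {A₁ A₂ A₃ : B} (u : A₁ ⟶ A₂) (v : A₂ ⟶ A₃) (t : F.obj A₁) :
    (F.map v).toFunctor.obj ((F.map u).toFunctor.obj t) = (F.map (u ≫ v)).toFunctor.obj t := by
  rw [F.map_comp]; rfl

lemma map_comp_map' {A₁ A₂ A₃ : B} (u : A₁ ⟶ A₂) (v : A₂ ⟶ A₃) {s t : F.obj A₁} (φ : s ⟶ t) :
    (F.map v).toFunctor.map ((F.map u).toFunctor.map φ) =
      eqToHom (map_comp_obj' u v s) ≫ (F.map (u ≫ v)).toFunctor.map φ ≫ eqToHom (map_comp_obj' u v t).symm := by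
  have h := Functor.congr_hom (congrArg Cat.Hom.toFunctor (F.map_comp u v)) φ
  simp only [h]; simp

lemma map_eqb {A₁ A₂ : B} {u v : A₁ ⟶ A₂} (h : u = v) {s t : F.obj A₁} (φ : s ⟶ t) :
    (F.map u).toFunctor.map φ = eqToHom (by rw [h]) ≫ (F.map v).toFunctor.map φ ≫ eqToHom (by rw [h]) := by
  subst h; simp

lemma isIso_fiber_of_isIso {X Y : Grothendieck F} (φ : X ⟶ Y) (h : IsIso φ) :
    IsIso φ.fiber := by
  let ψ := inv φ
  have h1 : φ ≫ ψ = 𝟙 X := IsIso.hom_inv_id φ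
  have h2 : ψ ≫ φ = 𝟙 Y := IsIso.inv_hom_id φ
  have hb1 : φ.base ≫ ψ.base = 𝟙 X.base := by rw [← Grothendieck.comp_base, h1]; rfl
  have hb2 : ψ.base ≫ φ.base = 𝟙 Y.base := by rw [← Grothendieck.comp_base, h2]; rfl
  have hf2 := Grothendieck.congr h2
  rw [Grothendieck.comp_fiber, Grothendieck.id_fiber, eqToHom_comp_iff, eqToHom_trans,
    eqToHom_trans] at hf2
  have hf1 := Grothendieck.congr h1
  rw [Grothendieck.comp_fiber, Grothendieck.id_fiber, eqToHom_comp_iff, eqToHom_trans,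
    eqToHom_trans] at hf1
  have e1 : Y.fiber = (F.map φ.base).toFunctor.obj ((F.map ψ.base).toFunctor.obj Y.fiber) := by
    rw [map_comp_obj', hb2, F.map_id]; rfl
  have hsepi : IsSplitEpi φ.fiber := by
    refine ⟨⟨⟨eqToHom e1 ≫ (F.map φ.base).toFunctor.map ψ.fiber, ?_⟩⟩⟩
    rw [Category.assoc, hf2, eqToHom_trans, eqToHom_refl]
  have e2 : X.fiber = (F.map ψ.base).toFunctor.obj ((F.map φ.base).toFunctor.obj X.fiber) := by
    rw [map_comp_obj', hb1, F.map_id]; rfl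
  have hsmono : IsSplitMono ((F.map ψ.base).toFunctor.map φ.fiber) := by
    refine ⟨⟨⟨ψ.fiber ≫ eqToHom e2, ?_⟩⟩⟩
    rw [← Category.assoc, hf1, eqToHom_trans, eqToHom_refl]
  haveI : Mono ((F.map ψ.base).toFunctor.map φ.fiber) := hsmono.mono
  haveI : IsSplitEpi φ.fiber := hsepi
  haveI : IsIso ((F.map ψ.base).toFunctor.map φ.fiber) := isIso_of_mono_of_isSplitEpi _
  haveI : IsIso ((F.map φ.base).toFunctor.map ((F.map ψ.base).toFunctor.map φ.fiber)) := inferInstance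
  have hid : F.map (ψ.base ≫ φ.base) = 𝟙 (F.obj Y.base) := by rw [hb2, F.map_id]
  have key : φ.fiber =
      eqToHom (by rw [map_comp_obj', hb2, F.map_id]; rfl) ≫
      (F.map φ.base).toFunctor.map ((F.map ψ.base).toFunctor.map φ.fiber) ≫
      eqToHom (by rw [map_comp_obj', hb2, F.map_id]; rfl) := by
    rw [map_comp_map' ψ.base φ.base φ.fiber, Functor.congr_hom (congrArg Cat.Hom.toFunctor hid) φ.fiber]
    simp
  rw [key]; infer_instance


set_option maxHeartbeats 1600000 in
lemma grothendieckIsPushout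
    {A X Y : Grothendieck F} (f : A ⟶ X) (g : A ⟶ Y)
    {PB : B} {hB : X.base ⟶ PB} {iB : Y.base ⟶ PB}
    (sqB : IsPushout f.base g.base hB iB)
    {Q : F.obj PB} {ht : (F.map hB).toFunctor.obj X.fiber ⟶ Q} {it : (F.map iB).toFunctor.obj Y.fiber ⟶ Q}
    (E : (F.map hB).toFunctor.obj ((F.map f.base).toFunctor.obj A.fiber) =
      (F.map iB).toFunctor.obj ((F.map g.base).toFunctor.obj A.fiber))
    (sqF : IsPushout ((F.map hB).toFunctor.map f.fiber) (eqToHom E ≫ (F.map iB).toFunctor.map g.fiber) ht it)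
    (pres : ∀ {Cb : B} (k : PB ⟶ Cb),
      IsPushout ((F.map k).toFunctor.map ((F.map hB).toFunctor.map f.fiber))
        ((F.map k).toFunctor.map (eqToHom E ≫ (F.map iB).toFunctor.map g.fiber))
        ((F.map k).toFunctor.map ht) ((F.map k).toFunctor.map it)) :
    IsPushout f g (Grothendieck.Hom.mk hB ht : X ⟶ Grothendieck.mk PB Q)
      (Grothendieck.Hom.mk iB it : Y ⟶ Grothendieck.mk PB Q) := by
  have wF : (F.map hB).toFunctor.map f.fiber ≫ ht = eqToHom E ≫ (F.map iB).toFunctor.map g.fiber ≫ it := by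
    simpa using sqF.w
  have w : f ≫ (Grothendieck.Hom.mk hB ht : X ⟶ Grothendieck.mk PB Q) =
      g ≫ (Grothendieck.Hom.mk iB it : Y ⟶ Grothendieck.mk PB Q) := by
    refine Grothendieck.ext _ _ sqB.w ?_
    simp only [Grothendieck.comp_fiber]
    rw [wF]
    simp; simp only [← Category.assoc]; repeat erw [eqToHom_trans]
  have key : ∀ s : Limits.PushoutCocone f g,
      ∃ d : Grothendieck.mk PB Q ⟶ s.pt,
        ((Grothendieck.Hom.mk hB ht : X ⟶ Grothendieck.mk PB Q) ≫ d = s.inl) ∧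
        ((Grothendieck.Hom.mk iB it : Y ⟶ Grothendieck.mk PB Q) ≫ d = s.inr) ∧
        (∀ m : Grothendieck.mk PB Q ⟶ s.pt,
          (Grothendieck.Hom.mk hB ht : X ⟶ Grothendieck.mk PB Q) ≫ m = s.inl →
          (Grothendieck.Hom.mk iB it : Y ⟶ Grothendieck.mk PB Q) ≫ m = s.inr → m = d) := by
    intro s
    have wb : f.base ≫ s.inl.base = g.base ≫ s.inr.base := by
      have := congrArg Grothendieck.Hom.base s.condition
      simpa using this
    set k : PB ⟶ s.pt.base := sqB.desc s.inl.base s.inr.base wb with hkdef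
    have hk1 : hB ≫ k = s.inl.base := sqB.inl_desc _ _ _
    have hk2 : iB ≫ k = s.inr.base := sqB.inr_desc _ _ _
    clear_value k
    have eα : (F.map k).toFunctor.obj ((F.map hB).toFunctor.obj X.fiber) = (F.map s.inl.base).toFunctor.obj X.fiber := by
      rw [map_comp_obj', hk1]
    have eβ : (F.map k).toFunctor.obj ((F.map iB).toFunctor.obj Y.fiber) = (F.map s.inr.base).toFunctor.obj Y.fiber := by
      rw [map_comp_obj', hk2]
    have hcon := Grothendieck.congr s.condition
    rw [Grothendieck.comp_fiber, Grothendieck.comp_fiber, eqToHom_comp_iff] at hcon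
    have wψ : (F.map k).toFunctor.map ((F.map hB).toFunctor.map f.fiber) ≫ (eqToHom eα ≫ s.inl.fiber) =
        (F.map k).toFunctor.map (eqToHom E ≫ (F.map iB).toFunctor.map g.fiber) ≫ (eqToHom eβ ≫ s.inr.fiber) := by
      rw [map_comp_map' hB _ f.fiber, map_eqb hk1 f.fiber]
      simp only [Functor.map_comp, eqToHom_map]
      rw [map_comp_map' iB _ g.fiber, map_eqb hk2 g.fiber]
      simp only [Category.assoc, eqToHom_trans, eqToHom_trans_assoc, eqToHom_refl,
        Category.id_comp]
      rw [hcon]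
      simp; simp only [← Category.assoc]; repeat erw [eqToHom_trans]
    refine ⟨⟨k, (pres k).desc _ _ wψ⟩, ?_, ?_, ?_⟩
    · have hfac := (pres k).inl_desc _ _ wψ
      refine Grothendieck.ext _ _ hk1 ?_
      simp only [Grothendieck.comp_fiber]
      rw [hfac]
      simp; simp only [← Category.assoc]; repeat erw [eqToHom_trans]
      simp
    · have hfac := (pres k).inr_desc _ _ wψ
      refine Grothendieck.ext _ _ hk2 ?_
      simp only [Grothendieck.comp_fiber]
      rw [hfac]
      simp; simp only [← Category.assoc]; repeat erw [eqToHom_trans]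
      simp
    · intro m hm1 hm2
      have e1 : hB ≫ m.base = s.inl.base := by
        have := congrArg Grothendieck.Hom.base hm1; simpa using this
      have e2 : iB ≫ m.base = s.inr.base := by
        have := congrArg Grothendieck.Hom.base hm2; simpa using this
      have hbase : m.base = k := by
        refine sqB.hom_ext ?_ ?_
        · rw [e1, hk1]
        · rw [e2, hk2]
      refine Grothendieck.ext _ _ hbase ?_
      have hc1 := Grothendieck.congr hm1
      rw [Grothendieck.comp_fiber, eqToHom_comp_iff] at hc1
      have hc2 := Grothendieck.congr hm2
      rw [Grothendieck.comp_fiber, eqToHom_comp_iff] at hc2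
      refine (pres k).hom_ext ?_ ?_
      · rw [(pres k).inl_desc _ _ wψ]
        simp only [map_eqb hbase.symm ht]
        simp only [Category.assoc, eqToHom_trans_assoc, eqToHom_refl, Category.id_comp]
        rw [hc1]
        simp; simp only [← Category.assoc]; repeat erw [eqToHom_trans]
      · rw [(pres k).inr_desc _ _ wψ]
        simp only [map_eqb hbase.symm it]
        simp only [Category.assoc, eqToHom_trans_assoc, eqToHom_refl, Category.id_comp]
        rw [hc2]
        simp; simp only [← Category.assoc]; repeat erw [eqToHom_trans]
  exact IsPushout.of_isColimit (Limits.PushoutCocone.IsColimit.mk w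
    (fun s => (key s).choose) (fun s => (key s).choose_spec.1)
    (fun s => (key s).choose_spec.2.1)
    (fun s m hm1 hm2 => (key s).choose_spec.2.2 m hm1 hm2))

noncomputable def grothendieckIsInitial {OB : B} (hOB : Limits.IsInitial OB) {OF : F.obj OB}
    (hOF : ∀ {A' : B} (u : OB ⟶ A'), Nonempty (Limits.IsInitial ((F.map u).toFunctor.obj OF))) :
    Limits.IsInitial (Grothendieck.mk OB OF) := by
  refine Limits.IsInitial.ofUniqueHom
    (fun Z => ⟨hOB.to Z.base, (hOF (hOB.to Z.base)).some.to Z.fiber⟩) (fun Z m => ?_)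
  have hbase : m.base = hOB.to Z.base := hOB.hom_ext _ _
  refine Grothendieck.ext _ _ hbase ?_
  exact (hOF (hOB.to Z.base)).some.hom_ext _ _

end AuxWaldhausen



/-- A Waldhausen structure on a category (requiring only an initial object). -/
structure IsWaldhausen {E : Type u} [Category.{v} E]
    (cof weq : MorphismProperty E) : Prop where
  has_initial : ∃ O : E, Nonempty (Limits.IsInitial O)
  cof_comp : ∀ ⦃X Y Z : E⦄ (f : X ⟶ Y) (g : Y ⟶ Z), cof f → cof g → cof (f ≫ g)
  weq_comp : ∀ ⦃X Y Z : E⦄ (f : X ⟶ Y) (g : Y ⟶ Z), weq f → weq g → weq (f ≫ g)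
  cof_iso : ∀ ⦃X Y : E⦄ (f : X ⟶ Y), IsIso f → cof f
  weq_iso : ∀ ⦃X Y : E⦄ (f : X ⟶ Y), IsIso f → weq f
  cof_initial : ∀ ⦃O X : E⦄, Limits.IsInitial O → ∀ f : O ⟶ X, cof f
  cof_pushout : ∀ ⦃A X Y : E⦄ (f : A ⟶ X) (g : A ⟶ Y), cof f →
    ∃ (P : E) (h : X ⟶ P) (i : Y ⟶ P), IsPushout f g h i ∧ cof i
  gluing : ∀ ⦃A X Y A' X' Y' P P' : E⦄
    (f : A ⟶ X) (g : A ⟶ Y) (h : X ⟶ P) (i : Y ⟶ P)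
    (f' : A' ⟶ X') (g' : A' ⟶ Y') (h' : X' ⟶ P') (i' : Y' ⟶ P')
    (a : A ⟶ A') (x : X ⟶ X') (y : Y ⟶ Y'),
    cof f → cof f' → weq a → weq x → weq y →
    f ≫ x = a ≫ f' → g ≫ y = a ≫ g' →
    ∀ (sq : IsPushout f g h i), IsPushout f' g' h' i' →
    ∀ (w : f ≫ (x ≫ h') = g ≫ (y ≫ i')),
      weq (sq.desc (x ≫ h') (y ≫ i') w)

section

variable {B : Type u} [Category.{v} B] (F : B ⥤ Cat.{v₂, u₂})
variable (cofB weqB : MorphismProperty B)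
variable (fcof fweq : ∀ A : B, MorphismProperty (F.obj A))

/-- Total cofibrations on the Grothendieck construction: a morphism `(u, φ)` is a total
cofibration if `u` is a cofibration in the base and `φ` is a cofibration in the fiber over
the codomain. -/
def totalCof : MorphismProperty (Grothendieck F) :=
  fun _ Y φ => cofB φ.base ∧ fcof Y.base φ.fiber

/-- Total weak equivalences on the Grothendieck construction. -/
def totalWeq : MorphismProperty (Grothendieck F) :=
  fun _ Y φ => weqB φ.base ∧ fweq Y.base φ.fiber

/-- The functor `F : B ⥤ Cat` underlying a Waldhausen opfibration has exact reindexing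
functors: each `F.map u` preserves initial objects, cofibrations, weak equivalences, and
pushout squares along cofibrations. -/
structure ExactReindexing : Prop where
  map_initial : ∀ ⦃A A' : B⦄ (u : A ⟶ A') (O : F.obj A),
    Limits.IsInitial O → Nonempty (Limits.IsInitial ((F.map u).toFunctor.obj O))
  map_cof : ∀ ⦃A A' : B⦄ (u : A ⟶ A') ⦃X Y : F.obj A⦄ (f : X ⟶ Y),
    fcof A f → fcof A' ((F.map u).toFunctor.map f)
  map_weq : ∀ ⦃A A' : B⦄ (u : A ⟶ A') ⦃X Y : F.obj A⦄ (f : X ⟶ Y),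
    fweq A f → fweq A' ((F.map u).toFunctor.map f)
  map_pushout : ∀ ⦃A A' : B⦄ (u : A ⟶ A')
    ⦃W X Y P : F.obj A⦄ (f : W ⟶ X) (g : W ⟶ Y) (h : X ⟶ P) (i : Y ⟶ P),
    fcof A f → IsPushout f g h i →
    IsPushout ((F.map u).toFunctor.map f) ((F.map u).toFunctor.map g) ((F.map u).toFunctor.map h)
      ((F.map u).toFunctor.map i)

end

/-- for a Waldhausen opfibration (presented as a functor `F : B ⥤ Cat` whose
fibers carry Waldhausen structures and whose reindexing functors are exact) over a Waldhausen
category `B`, the total category (the Grothendieck construction of `F`) equipped with total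
cofibrations and total weak equivalences is a Waldhausen category. -/
theorem total_isWaldhausen {B : Type u} [Category.{v} B] (F : B ⥤ Cat.{v₂, u₂})
    (cofB weqB : MorphismProperty B)
    (fcof fweq : ∀ A : B, MorphismProperty (F.obj A))
    (hB : IsWaldhausen cofB weqB)
    (hfib : ∀ A : B, IsWaldhausen (fcof A) (fweq A))
    (hex : ExactReindexing F fcof fweq) :
    IsWaldhausen (totalCof F cofB fcof) (totalWeq F weqB fweq) := by
  obtain ⟨OB, ⟨hOB⟩⟩ := hB.has_initial
  obtain ⟨OF, ⟨hOF⟩⟩ := (hfib OB).has_initial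
  have hinit : Limits.IsInitial (Grothendieck.mk OB OF) :=
    grothendieckIsInitial hOB (fun {A'} u => hex.map_initial u OF hOF)
  have cof_iso : ∀ ⦃X Y : Grothendieck F⦄ (φ : X ⟶ Y), IsIso φ → totalCof F cofB fcof φ :=
    fun X Y φ hiso => ⟨hB.cof_iso φ.base (isIso_base_of_isIso φ hiso),
      (hfib Y.base).cof_iso φ.fiber (isIso_fiber_of_isIso φ hiso)⟩
  have weq_iso : ∀ ⦃X Y : Grothendieck F⦄ (φ : X ⟶ Y), IsIso φ → totalWeq F weqB fweq φ :=
    fun X Y φ hiso => ⟨hB.weq_iso φ.base (isIso_base_of_isIso φ hiso),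
      (hfib Y.base).weq_iso φ.fiber (isIso_fiber_of_isIso φ hiso)⟩
  have cof_comp : ∀ ⦃X Y Z : Grothendieck F⦄ (φ : X ⟶ Y) (ψ : Y ⟶ Z),
      totalCof F cofB fcof φ → totalCof F cofB fcof ψ → totalCof F cofB fcof (φ ≫ ψ) := by
    intro X Y Z φ ψ hφ hψ
    refine ⟨hB.cof_comp _ _ hφ.1 hψ.1, ?_⟩
    rw [Grothendieck.comp_fiber]
    exact (hfib Z.base).cof_comp _ _ ((hfib Z.base).cof_iso _ inferInstance)
      ((hfib Z.base).cof_comp _ _ (hex.map_cof ψ.base φ.fiber hφ.2) hψ.2)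
  have weq_comp : ∀ ⦃X Y Z : Grothendieck F⦄ (φ : X ⟶ Y) (ψ : Y ⟶ Z),
      totalWeq F weqB fweq φ → totalWeq F weqB fweq ψ → totalWeq F weqB fweq (φ ≫ ψ) := by
    intro X Y Z φ ψ hφ hψ
    refine ⟨hB.weq_comp _ _ hφ.1 hψ.1, ?_⟩
    rw [Grothendieck.comp_fiber]
    exact (hfib Z.base).weq_comp _ _ ((hfib Z.base).weq_iso _ inferInstance)
      ((hfib Z.base).weq_comp _ _ (hex.map_weq ψ.base φ.fiber hφ.2) hψ.2)
  refine ⟨⟨Grothendieck.mk OB OF, ⟨hinit⟩⟩, cof_comp, weq_comp, cof_iso, weq_iso, ?_, ?_, ?_⟩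
  · -- cof_initial
    intro O X hO φ
    have e : O ≅ Grothendieck.mk OB OF := hO.uniqueUpToIso hinit
    have : φ = e.hom ≫ (e.inv ≫ φ) := by simp
    rw [this]
    refine cof_comp _ _ (cof_iso _ inferInstance) ?_
    refine ⟨hB.cof_initial hOB _, (hfib X.base).cof_initial ?_ _⟩
    exact (hex.map_initial _ OF hOF).some
  · -- cof_pushout
    intro A X Y f g hf
    obtain ⟨PB, hB1, iB1, bsq, bcof⟩ := hB.cof_pushout f.base g.base hf.1
    have E1 : (F.map hB1).toFunctor.obj ((F.map f.base).toFunctor.obj A.fiber) =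
        (F.map iB1).toFunctor.obj ((F.map g.base).toFunctor.obj A.fiber) := by
      rw [map_comp_obj', map_comp_obj', bsq.w]
    have Mcof : fcof PB ((F.map hB1).toFunctor.map f.fiber) := hex.map_cof hB1 f.fiber hf.2
    obtain ⟨Q, ht, it, fsq, fcofit⟩ := (hfib PB).cof_pushout
      ((F.map hB1).toFunctor.map f.fiber) (eqToHom E1 ≫ (F.map iB1).toFunctor.map g.fiber) Mcof
    refine ⟨Grothendieck.mk PB Q, ⟨hB1, ht⟩, ⟨iB1, it⟩,
      grothendieckIsPushout f g bsq E1 fsq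
        (fun {Cb} k => hex.map_pushout k _ _ _ _ Mcof fsq), ⟨bcof, fcofit⟩⟩
  · -- gluing
    intro A X Y A' X' Y' P P' f g h i f' g' h' i' a x y hf hf' ha hx hy hcx hcy sq sq' w
    -- constructed pushout for (f, g)
    obtain ⟨PB, hB1, iB1, bsq, bcof⟩ := hB.cof_pushout f.base g.base hf.1
    have E1 : (F.map hB1).toFunctor.obj ((F.map f.base).toFunctor.obj A.fiber) =
        (F.map iB1).toFunctor.obj ((F.map g.base).toFunctor.obj A.fiber) := by
      rw [map_comp_obj', map_comp_obj', bsq.w]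
    have Mcof : fcof PB ((F.map hB1).toFunctor.map f.fiber) := hex.map_cof hB1 f.fiber hf.2
    obtain ⟨Q, ht, it, fsq, fcofit⟩ := (hfib PB).cof_pushout
      ((F.map hB1).toFunctor.map f.fiber) (eqToHom E1 ≫ (F.map iB1).toFunctor.map g.fiber) Mcof
    have csq := grothendieckIsPushout f g bsq E1 fsq
      (fun {Cb} k => hex.map_pushout k _ _ _ _ Mcof fsq)
    -- constructed pushout for (f', g')
    obtain ⟨PB', hB1', iB1', bsq', bcof'⟩ := hB.cof_pushout f'.base g'.base hf'.1
    have E1' : (F.map hB1').toFunctor.obj ((F.map f'.base).toFunctor.obj A'.fiber) =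
        (F.map iB1').toFunctor.obj ((F.map g'.base).toFunctor.obj A'.fiber) := by
      rw [map_comp_obj', map_comp_obj', bsq'.w]
    have Mcof' : fcof PB' ((F.map hB1').toFunctor.map f'.fiber) := hex.map_cof hB1' f'.fiber hf'.2
    obtain ⟨Q', ht', it', fsq', fcofit'⟩ := (hfib PB').cof_pushout
      ((F.map hB1').toFunctor.map f'.fiber) (eqToHom E1' ≫ (F.map iB1').toFunctor.map g'.fiber) Mcof'
    have csq' := grothendieckIsPushout f' g' bsq' E1' fsq'
      (fun {Cb} k => hex.map_pushout k _ _ _ _ Mcof' fsq')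
    -- base comparison map
    have hcxb : f.base ≫ x.base = a.base ≫ f'.base := by
      have := congrArg Grothendieck.Hom.base hcx; simpa using this
    have hcyb : g.base ≫ y.base = a.base ≫ g'.base := by
      have := congrArg Grothendieck.Hom.base hcy; simpa using this
    have wb : f.base ≫ (x.base ≫ hB1') = g.base ≫ (y.base ≫ iB1') := by
      rw [← Category.assoc, hcxb, ← Category.assoc, hcyb, Category.assoc, Category.assoc,
        bsq'.w]
    set k : PB ⟶ PB' := bsq.desc (x.base ≫ hB1') (y.base ≫ iB1') wb with hkdef
    have weqk : weqB k := hB.gluing f.base g.base hB1 iB1 f'.base g'.base hB1' iB1'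
      a.base x.base y.base hf.1 hf'.1 ha.1 hx.1 hy.1 hcxb hcyb bsq bsq' wb
    have hk1 : hB1 ≫ k = x.base ≫ hB1' := bsq.inl_desc _ _ _
    have hk2 : iB1 ≫ k = y.base ≫ iB1' := bsq.inr_desc _ _ _
    clear_value k
    -- fiber comparison data
    have eqx : (F.map k).toFunctor.obj ((F.map hB1).toFunctor.obj X.fiber) =
        (F.map hB1').toFunctor.obj ((F.map x.base).toFunctor.obj X.fiber) := by
      rw [map_comp_obj', map_comp_obj', hk1]
    have eqy : (F.map k).toFunctor.obj ((F.map iB1).toFunctor.obj Y.fiber) =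
        (F.map iB1').toFunctor.obj ((F.map y.base).toFunctor.obj Y.fiber) := by
      rw [map_comp_obj', map_comp_obj', hk2]
    have hbase3 : f.base ≫ hB1 ≫ k = a.base ≫ f'.base ≫ hB1' := by
      rw [hk1, ← Category.assoc, hcxb, Category.assoc]
    have hbase4 : g.base ≫ iB1 ≫ k = a.base ≫ g'.base ≫ iB1' := by
      rw [hk2, ← Category.assoc, hcyb, Category.assoc]
    have eqa : (F.map k).toFunctor.obj ((F.map hB1).toFunctor.obj ((F.map f.base).toFunctor.obj A.fiber)) =
        (F.map (f'.base ≫ hB1')).toFunctor.obj ((F.map a.base).toFunctor.obj A.fiber) := by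
      rw [map_comp_obj', map_comp_obj', map_comp_obj', hbase3]
    have eqa2 : (F.map (f'.base ≫ hB1')).toFunctor.obj A'.fiber =
        (F.map hB1').toFunctor.obj ((F.map f'.base).toFunctor.obj A'.fiber) := (map_comp_obj' _ _ _).symm
    set x₁ : (F.map k).toFunctor.obj ((F.map hB1).toFunctor.obj X.fiber) ⟶ (F.map hB1').toFunctor.obj X'.fiber :=
      eqToHom eqx ≫ (F.map hB1').toFunctor.map x.fiber with hx1def
    set y₁ : (F.map k).toFunctor.obj ((F.map iB1).toFunctor.obj Y.fiber) ⟶ (F.map iB1').toFunctor.obj Y'.fiber :=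
      eqToHom eqy ≫ (F.map iB1').toFunctor.map y.fiber with hy1def
    set a₁ : (F.map k).toFunctor.obj ((F.map hB1).toFunctor.obj ((F.map f.base).toFunctor.obj A.fiber)) ⟶
        (F.map hB1').toFunctor.obj ((F.map f'.base).toFunctor.obj A'.fiber) :=
      eqToHom eqa ≫ (F.map (f'.base ≫ hB1')).toFunctor.map a.fiber ≫ eqToHom eqa2 with ha1def
    have weqx₁ : fweq PB' x₁ := (hfib PB').weq_comp _ _
      ((hfib PB').weq_iso _ inferInstance) (hex.map_weq hB1' x.fiber hx.2)
    have weqy₁ : fweq PB' y₁ := (hfib PB').weq_comp _ _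
      ((hfib PB').weq_iso _ inferInstance) (hex.map_weq iB1' y.fiber hy.2)
    have weqa₁ : fweq PB' a₁ := (hfib PB').weq_comp _ _
      ((hfib PB').weq_iso _ inferInstance) ((hfib PB').weq_comp _ _
        (hex.map_weq (f'.base ≫ hB1') a.fiber ha.2) ((hfib PB').weq_iso _ inferInstance))
    -- the two commutation squares for the fiber gluing
    have hcxf := Grothendieck.congr hcx
    rw [Grothendieck.comp_fiber, Grothendieck.comp_fiber, eqToHom_comp_iff] at hcxf
    have hcyf := Grothendieck.congr hcy
    rw [Grothendieck.comp_fiber, Grothendieck.comp_fiber, eqToHom_comp_iff] at hcyf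
    have comm1 : (F.map k).toFunctor.map ((F.map hB1).toFunctor.map f.fiber) ≫ x₁ =
        a₁ ≫ (F.map hB1').toFunctor.map f'.fiber := by
      have hcxf' := congrArg (fun z => (F.map hB1').toFunctor.map z) hcxf
      simp only [Functor.map_comp, eqToHom_map] at hcxf'
      rw [map_comp_map' x.base hB1' f.fiber, map_comp_map' f'.base hB1' a.fiber] at hcxf'
      rw [hx1def, ha1def, map_comp_map' hB1 k f.fiber, map_eqb hk1 f.fiber]
      simp only [Category.assoc, eqToHom_trans_assoc, eqToHom_refl, Category.id_comp] at hcxf' ⊢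
      rw [eqToHom_comp_iff] at hcxf'
      rw [hcxf']
      simp
    have comm2 : (F.map k).toFunctor.map (eqToHom E1 ≫ (F.map iB1).toFunctor.map g.fiber) ≫ y₁ =
        a₁ ≫ (eqToHom E1' ≫ (F.map iB1').toFunctor.map g'.fiber) := by
      have hcyf' := congrArg (fun z => (F.map iB1').toFunctor.map z) hcyf
      simp only [Functor.map_comp, eqToHom_map] at hcyf'
      rw [map_comp_map' y.base iB1' g.fiber, map_comp_map' g'.base iB1' a.fiber] at hcyf'
      rw [hy1def, ha1def, map_eqb bsq'.w a.fiber]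
      simp only [Functor.map_comp, eqToHom_map]
      rw [map_comp_map' iB1 k g.fiber, map_eqb hk2 g.fiber]
      simp only [Category.assoc, eqToHom_trans_assoc, eqToHom_refl, Category.id_comp] at hcyf' ⊢
      rw [eqToHom_comp_iff] at hcyf'
      rw [hcyf']
      simp
    -- induced map between the constructed pushouts
    have psq := hex.map_pushout k ((F.map hB1).toFunctor.map f.fiber)
      (eqToHom E1 ≫ (F.map iB1).toFunctor.map g.fiber) ht it Mcof fsq
    have wψ : (F.map k).toFunctor.map ((F.map hB1).toFunctor.map f.fiber) ≫ (x₁ ≫ ht') =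
        (F.map k).toFunctor.map (eqToHom E1 ≫ (F.map iB1).toFunctor.map g.fiber) ≫ (y₁ ≫ it') := by
      have wfsq' : (F.map hB1').toFunctor.map f'.fiber ≫ ht' =
          eqToHom E1' ≫ (F.map iB1').toFunctor.map g'.fiber ≫ it' := by simpa using fsq'.w
      rw [← Category.assoc, comm1, ← Category.assoc, comm2]
      simp only [Category.assoc]
      rw [wfsq']
    set Dfib : (F.map k).toFunctor.obj Q ⟶ Q' := psq.desc (x₁ ≫ ht') (y₁ ≫ it') wψ with hDdef
    have weqD : fweq PB' Dfib := (hfib PB').gluing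
      ((F.map k).toFunctor.map ((F.map hB1).toFunctor.map f.fiber))
      ((F.map k).toFunctor.map (eqToHom E1 ≫ (F.map iB1).toFunctor.map g.fiber))
      ((F.map k).toFunctor.map ht) ((F.map k).toFunctor.map it)
      ((F.map hB1').toFunctor.map f'.fiber) (eqToHom E1' ≫ (F.map iB1').toFunctor.map g'.fiber) ht' it'
      a₁ x₁ y₁
      (hex.map_cof k _ Mcof) Mcof' weqa₁ weqx₁ weqy₁ comm1 comm2 psq fsq' wψ
    set D : Grothendieck.mk PB Q ⟶ Grothendieck.mk PB' Q' :=
      ⟨k, Dfib⟩ with hDdef2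
    have weqDtot : totalWeq F weqB fweq D := ⟨weqk, weqD⟩
    have hfac1 : (F.map k).toFunctor.map ht ≫ Dfib = x₁ ≫ ht' := psq.inl_desc _ _ wψ
    have hfac2 : (F.map k).toFunctor.map it ≫ Dfib = y₁ ≫ it' := psq.inr_desc _ _ wψ
    have HD : (Grothendieck.Hom.mk hB1 ht : X ⟶ Grothendieck.mk PB Q) ≫ D =
        x ≫ (Grothendieck.Hom.mk hB1' ht' : X' ⟶ Grothendieck.mk PB' Q') := by
      refine Grothendieck.ext _ _ hk1 ?_
      simp only [Grothendieck.comp_fiber]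
      rw [hfac1, hx1def]
      simp; simp only [← Category.assoc]; repeat erw [eqToHom_trans]
    have ID : (Grothendieck.Hom.mk iB1 it : Y ⟶ Grothendieck.mk PB Q) ≫ D =
        y ≫ (Grothendieck.Hom.mk iB1' it' : Y' ⟶ Grothendieck.mk PB' Q') := by
      refine Grothendieck.ext _ _ hk2 ?_
      simp only [Grothendieck.comp_fiber]
      rw [hfac2, hy1def]
      simp; simp only [← Category.assoc]; repeat erw [eqToHom_trans]
    -- compare with the given pushout squares
    set e := csq.isoIsPushout _ _ sq with hedef
    set e' := csq'.isoIsPushout _ _ sq' with hedef'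
    have he1 : h ≫ e.inv = (Grothendieck.Hom.mk hB1 ht : X ⟶ Grothendieck.mk PB Q) := by
      rw [hedef]; exact csq.inl_isoIsPushout_inv (h' := sq)
    have he2 : i ≫ e.inv = (Grothendieck.Hom.mk iB1 it : Y ⟶ Grothendieck.mk PB Q) := by
      rw [hedef]; exact csq.inr_isoIsPushout_inv (h' := sq)
    have he1' : (Grothendieck.Hom.mk hB1' ht' : X' ⟶ Grothendieck.mk PB' Q') ≫ e'.hom = h' := by
      rw [hedef']; exact csq'.inl_isoIsPushout_hom (h' := sq')
    have he2' : (Grothendieck.Hom.mk iB1' it' : Y' ⟶ Grothendieck.mk PB' Q') ≫ e'.hom = i' := by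
      rw [hedef']; exact csq'.inr_isoIsPushout_hom (h' := sq')
    have final : sq.desc (x ≫ h') (y ≫ i') w = e.inv ≫ D ≫ e'.hom := by
      refine sq.hom_ext ?_ ?_
      · rw [sq.inl_desc, ← Category.assoc, he1, ← Category.assoc, HD,
          Category.assoc, he1']
      · rw [sq.inr_desc, ← Category.assoc, he2, ← Category.assoc, ID,
          Category.assoc, he2']
    rw [final]
    exact weq_comp _ _ (weq_iso _ inferInstance)
      (weq_comp _ _ weqDtot (weq_iso _ inferInstance))
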